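/- Let M be an affine algebraic monoid with unit group G and let H ⊆ G be a subgroup, closed in M. For every character γ ∈ X(H) there exists an extendible character ρ ∈ E_M(H) such that the product γρ is also extendible, i.e. γρ ∈ E_M(H). -/

import Mathlib

open MvPolynomial

namespace AlgebraicMonoid

variable (k : Type) [Field k] [IsAlgClosed k] (n : ℕ)

/-- `n × n` matrices over `k`: the ambient affine space for linear algebraic monoids. -/
abbrev Mat := Matrix (Fin n) (Fin n) k

/-- Polynomial functions on the space of `n × n` matrices. -/
abbrev MPoly := MvPolynomial (Fin n × Fin n) k

variable {k n}

/-- Evaluation of a polynomial at a matrix. -/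
noncomputable def mEval (x : Mat k n) (p : MPoly k n) : k :=
  eval (fun ij => x ij.1 ij.2) p

/-- The (regular function induced by) `p` vanishes identically on `X`. -/
def VanishesOn (X : Set (Mat k n)) (p : MPoly k n) : Prop :=
  ∀ x ∈ X, mEval x p = 0

/-- Zariski closed subsets of matrix space. -/
def ZClosed (X : Set (Mat k n)) : Prop :=
  ∃ S : Set (MPoly k n), X = {x | ∀ p ∈ S, mEval x p = 0}

/-- An affine (linear) algebraic monoid, realized as a Zariski closed submonoid of
matrix space (every affine algebraic monoid admits such a closed embedding). -/
structure IsAlgMonoid (M : Set (Mat k n)) : Prop where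
  zclosed : ZClosed M
  one_mem : (1 : Mat k n) ∈ M
  mul_mem : ∀ a ∈ M, ∀ b ∈ M, a * b ∈ M

/-- The unit group `G(M)` of the monoid `M`. -/
def unitGroup (M : Set (Mat k n)) : Set (Mat k n) :=
  {g | g ∈ M ∧ ∃ h ∈ M, g * h = 1 ∧ h * g = 1}

/-- `H` is an (abstract) subgroup of `G`. -/
def IsSubgroupOf (H G : Set (Mat k n)) : Prop :=
  H ⊆ G ∧ (1 : Mat k n) ∈ H ∧ (∀ a ∈ H, ∀ b ∈ H, a * b ∈ H) ∧
    ∀ a ∈ H, ∃ b ∈ H, a * b = 1 ∧ b * a = 1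

/-- `Y` is closed in `X` (for the Zariski topology). -/
def IsClosedIn (Y X : Set (Mat k n)) : Prop :=
  Y ⊆ X ∧ ∃ C : Set (Mat k n), ZClosed C ∧ Y = C ∩ X

/-- `X` is irreducible: nonempty, and its vanishing ideal is prime. -/
def IrreducibleSet (X : Set (Mat k n)) : Prop :=
  X.Nonempty ∧ ∀ p q : MPoly k n, VanishesOn X (p * q) → VanishesOn X p ∨ VanishesOn X q

/-- The action of `H` on `M` by left multiplication is observable: every nonzero
`H`-stable ideal of `k[M]` (presented as an ideal of the polynomial ring containing
the vanishing ideal of `M`) contains a nonzero `H`-invariant function.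
Here `H` acts on `k[M]` by `(f · h)(m) = f (h * m)`. -/
def LeftObservable (H M : Set (Mat k n)) : Prop :=
  ∀ J : Ideal (MPoly k n),
    (∀ p : MPoly k n, VanishesOn M p → p ∈ J) →
    (∀ p ∈ J, ∀ h ∈ H, ∃ p' ∈ J, ∀ m ∈ M, mEval m p' = mEval (h * m) p) →
    (∃ p ∈ J, ¬ VanishesOn M p) →
    ∃ p ∈ J, (¬ VanishesOn M p) ∧ ∀ h ∈ H, ∀ m ∈ M, mEval (h * m) p = mEval m p

/-- `χ` defines a character of (the monoid) `X`, i.e. a regular multiplicative map to `k`. -/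
structure IsCharacterOn (X : Set (Mat k n)) (χ : MPoly k n) : Prop where
  map_one : mEval 1 χ = 1
  map_mul : ∀ a ∈ X, ∀ b ∈ X, mEval (a * b) χ = mEval a χ * mEval b χ

/-- The character `χ` of `H` is extendible to `M`: there is a nonzero
`H`-semiinvariant `f ∈ k[M]` of weight `χ`, i.e. `f(h m) = χ(h) f(m)`. -/
def Extendible (M H : Set (Mat k n)) (χ : MPoly k n) : Prop :=
  ∃ f : MPoly k n, (¬ VanishesOn M f) ∧
    ∀ h ∈ H, ∀ m ∈ M, mEval (h * m) f = mEval h χ * mEval m f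

/-- The matrix of regular functions `P` evaluated at `x`: a rational representation. -/
noncomputable def repApply {d : ℕ} (P : Matrix (Fin d) (Fin d) (MPoly k n)) (x : Mat k n) :
    Matrix (Fin d) (Fin d) k :=
  Matrix.of fun i j => mEval x (P i j)

/-- `P` defines a (finite dimensional rational) right `M`-module structure on `k^d`,
the action being `v · x = v ᵥ* (P x)`. -/
def IsRightRep {d : ℕ} (M : Set (Mat k n)) (P : Matrix (Fin d) (Fin d) (MPoly k n)) : Prop :=
  repApply P 1 = 1 ∧ ∀ a ∈ M, ∀ b ∈ M, repApply P (a * b) = repApply P a * repApply P b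

/-! ### Auxiliary material for the proof -/

section Aux

variable {k : Type} [Field k] [IsAlgClosed k] {n : ℕ}

/-- Substitution `p(x) ↦ p(a·x)` as an algebra endomorphism of the polynomial ring. -/
noncomputable def Tsub (a : Mat k n) : MPoly k n →ₐ[k] MPoly k n :=
  aeval fun ij => ∑ l, C (a ij.1 l) * X (l, ij.2)

lemma mEval_eq_aeval (x : Mat k n) (p : MPoly k n) :
    mEval x p = aeval (fun ij : Fin n × Fin n => x ij.1 ij.2) p := by
  rw [mEval, ← coe_aeval_eq_eval]
  rfl

lemma mEval_Tsub (a x : Mat k n) (p : MPoly k n) :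
    mEval x (Tsub a p) = mEval (a * x) p := by
  rw [mEval_eq_aeval, Tsub, comp_aeval_apply, mEval_eq_aeval]
  congr 1
  congr 1
  funext ij
  simp [Matrix.mul_apply]

lemma eval_eq_mEval (x : Fin n × Fin n → k) (p : MPoly k n) :
    eval x p = mEval (Matrix.of fun i j => x (i, j)) p := by
  rw [mEval]
  congr 1

lemma Tsub_Tsub (a b : Mat k n) (p : MPoly k n) :
    Tsub a (Tsub b p) = Tsub (b * a) p := by
  apply MvPolynomial.funext
  intro x
  rw [eval_eq_mEval, eval_eq_mEval, mEval_Tsub, mEval_Tsub, mEval_Tsub, mul_assoc]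

lemma Tsub_one (p : MPoly k n) : Tsub (1 : Mat k n) p = p := by
  apply MvPolynomial.funext
  intro x
  rw [eval_eq_mEval, eval_eq_mEval, mEval_Tsub, one_mul]

/-- The "generic" substitution: coefficients are polynomials in the entries of the
substituting matrix. -/
noncomputable def Theta : MPoly k n →ₐ[k] MvPolynomial (Fin n × Fin n) (MPoly k n) :=
  aeval fun ij => ∑ l, C (X (ij.1, l)) * X (l, ij.2)

lemma map_Theta (m : Mat k n) (p : MPoly k n) :
    MvPolynomial.map (MvPolynomial.eval fun ij : Fin n × Fin n => m ij.1 ij.2)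
      (Theta p) = Tsub m p := by
  have h : ((MvPolynomial.map
        (MvPolynomial.eval fun ij : Fin n × Fin n => m ij.1 ij.2)).comp
        (Theta (k := k) (n := n)).toRingHom) = (Tsub m).toRingHom := by
    apply MvPolynomial.ringHom_ext
    · intro r
      simp [Theta, Tsub, MvPolynomial.algebraMap_eq]
    · intro ij
      simp [Theta, Tsub, map_sum]
  exact RingHom.congr_fun h p

lemma Tsub_eq_sum (m : Mat k n) (p : MPoly k n) :
    Tsub m p = ∑ μ ∈ (Theta p).support,
      mEval m (coeff μ (Theta p)) • (monomial μ (1 : k)) := by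
  rw [← map_Theta m p]
  conv_lhs => rw [(Theta p).as_sum]
  rw [map_sum]
  refine Finset.sum_congr rfl fun μ _ => ?_
  rw [map_monomial, MvPolynomial.smul_monomial, smul_eq_mul, mul_one]
  rfl

lemma Tsub_mem_span (m : Mat k n) (p : MPoly k n) :
    Tsub m p ∈ Submodule.span k
      ((fun μ => monomial μ (1 : k)) '' ((Theta p).support : Set _)) := by
  rw [Tsub_eq_sum]
  exact Submodule.sum_mem _ fun μ hμ => Submodule.smul_mem _ _
    (Submodule.subset_span ⟨μ, hμ, rfl⟩)

lemma exists_coeff_poly (c : MPoly k n →ₗ[k] k) (p : MPoly k n) :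
    ∃ F : MPoly k n, ∀ m : Mat k n, mEval m F = c (Tsub m p) := by
  refine ⟨∑ μ ∈ (Theta p).support, c (monomial μ 1) • coeff μ (Theta p), fun m => ?_⟩
  rw [Tsub_eq_sum, map_sum]
  simp only [LinearMap.map_smul, smul_eq_mul]
  rw [mEval, map_sum]
  refine Finset.sum_congr rfl fun μ _ => ?_
  rw [MvPolynomial.smul_eval, mul_comm]
  rfl

/-- Core construction: given a family of polynomials with dual functionals, the
determinant of the associated "matrix coefficient" polynomial matrix is a
semiinvariant whose weight at `h` is the determinant of any coordinate matrix of
the translated family. -/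
lemma core {ι : Type} [Fintype ι] [DecidableEq ι] (b : ι → MPoly k n)
    (c : ι → MPoly k n →ₗ[k] k) (hdual : ∀ i j, c j (b i) = if i = j then 1 else 0) :
    ∃ f : MPoly k n, mEval 1 f = 1 ∧
      ∀ (h : Mat k n) (B : Matrix ι ι k), (∀ i, Tsub h (b i) = ∑ s, B i s • b s) →
        ∀ m : Mat k n, mEval (h * m) f = B.det * mEval m f := by
  choose F hF using fun i j : ι => exists_coeff_poly (c j) (b i)
  have key : ∀ m : Mat k n,
      mEval m (Matrix.of fun i j => F i j).det
        = (Matrix.of fun i j => c j (Tsub m (b i)) : Matrix ι ι k).det := by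
    intro m
    rw [mEval,
      RingHom.map_det (MvPolynomial.eval fun ij : Fin n × Fin n => m ij.1 ij.2)]
    congr 1
    ext i j
    simp only [Matrix.map_apply, Matrix.of_apply]
    exact hF i j m
  refine ⟨(Matrix.of fun i j => F i j).det, ?_, ?_⟩
  · rw [key]
    have h1 : (Matrix.of fun i j => c j (Tsub 1 (b i)) : Matrix ι ι k) = 1 := by
      ext i j
      rw [Matrix.of_apply, Tsub_one, hdual, Matrix.one_apply]
    rw [h1, Matrix.det_one]
  · intro h B hB m
    rw [key, key]
    have h2 : (Matrix.of fun i j => c j (Tsub (h * m) (b i)) : Matrix ι ι k)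
        = B * (Matrix.of fun i j => c j (Tsub m (b i))) := by
      ext i j
      rw [Matrix.of_apply, Matrix.mul_apply, ← Tsub_Tsub m h (b i), hB i, map_sum,
        map_sum]
      refine Finset.sum_congr rfl fun s _ => ?_
      rw [map_smul, map_smul, smul_eq_mul, Matrix.of_apply]
    rw [h2, Matrix.det_mul]

end Aux

set_option maxHeartbeats 1000000 in
/-- Let `M` be an affine algebraic monoid with unit group `G` and
`H ⊆ G` a subgroup, closed in `M`.  For every character `γ ∈ X(H)` there exists an
extendible character `ρ ∈ E_M(H)` such that `γρ ∈ E_M(H)` as well. -/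
theorem exists_extendible_multiplier
    {k : Type} [Field k] [IsAlgClosed k] {n : ℕ}
    (M H : Set (Mat k n)) (hM : IsAlgMonoid M)
    (hH : IsSubgroupOf H (unitGroup M)) (hHcl : IsClosedIn H M)
    (γ : MPoly k n) (hγ : IsCharacterOn H γ) :
    ∃ ρ : MPoly k n, IsCharacterOn H ρ ∧ Extendible M H ρ ∧ Extendible M H (γ * ρ) := by
  classical
  obtain ⟨hHG, h1H, hmulH, -⟩ := hH
  -- the subspace spanned by the functions `x ↦ γ(hx) - γ(h)γ(x)`, `h ∈ H`
  set U : Submodule k (MPoly k n) :=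
    Submodule.span k ((fun h => Tsub h γ - mEval h γ • γ) '' H) with hU
  have hgen : ∀ h ∈ H, Tsub h γ - mEval h γ • γ ∈ U :=
    fun h hh => Submodule.subset_span ⟨h, hh, rfl⟩
  -- `U` is finite dimensional
  haveI hfinspan : FiniteDimensional k
      (Submodule.span k ((fun μ => monomial μ (1 : k)) '' ((Theta γ).support : Set (Fin n × Fin n →₀ ℕ)))) :=
    FiniteDimensional.span_of_finite k
      (Set.Finite.image _ (Theta γ).support.finite_toSet)
  haveI hfin : FiniteDimensional k U := by
    refine Submodule.finiteDimensional_of_le (S₂ := Submodule.span k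
      ((fun μ => monomial μ (1 : k)) '' ((Theta γ).support : Set (Fin n × Fin n →₀ ℕ)))) ?_
    rw [hU, Submodule.span_le]
    rintro - ⟨h, -, rfl⟩
    refine Submodule.sub_mem _ (Tsub_mem_span h γ) (Submodule.smul_mem _ _ ?_)
    have := Tsub_mem_span (1 : Mat k n) γ
    rwa [Tsub_one] at this
  -- `U` is stable under translation by elements of `H`
  have hstab : ∀ h ∈ H, ∀ u ∈ U, Tsub h u ∈ U := by
    intro h hh u hu
    refine Submodule.span_induction ?_ ?_ ?_ ?_ hu
    · rintro - ⟨h', hh', rfl⟩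
      have hmul : mEval (h' * h) γ = mEval h' γ * mEval h γ := hγ.map_mul h' hh' h hh
      have hexp : Tsub h (Tsub h' γ - mEval h' γ • γ)
          = (Tsub (h' * h) γ - mEval (h' * h) γ • γ)
            - mEval h' γ • (Tsub h γ - mEval h γ • γ) := by
        rw [map_sub, map_smul, Tsub_Tsub, hmul, smul_sub, smul_smul]
        abel
      rw [hexp]
      exact Submodule.sub_mem _ (hgen _ (hmulH h' hh' h hh))
        (Submodule.smul_mem _ _ (hgen _ hh))
    · rw [map_zero]; exact Submodule.zero_mem _
    · intro x y _ _ ihx ihy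
      rw [map_add]; exact Submodule.add_mem _ ihx ihy
    · intro t x _ ih
      rw [map_smul]; exact Submodule.smul_mem _ _ ih
  -- all elements of `U` vanish at `1`
  have hvan : ∀ u ∈ U, mEval 1 u = 0 := by
    intro u hu
    refine Submodule.span_induction ?_ ?_ ?_ ?_ hu
    · rintro - ⟨h', hh', rfl⟩
      rw [mEval_eq_aeval, map_sub, map_smul, ← mEval_eq_aeval, ← mEval_eq_aeval,
        mEval_Tsub, mul_one, hγ.map_one, smul_eq_mul, mul_one, sub_self]
    · rw [mEval_eq_aeval, map_zero]
    · intro x y _ _ ihx ihy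
      rw [mEval_eq_aeval, map_add, ← mEval_eq_aeval, ← mEval_eq_aeval, ihx, ihy, add_zero]
    · intro t x _ ih
      rw [mEval_eq_aeval, map_smul, ← mEval_eq_aeval, ih, smul_zero]
  -- a basis of `U` and dual functionals on the whole polynomial ring
  set r := Module.finrank k U with hr
  set e : Module.Basis (Fin r) k U := Module.finBasis k U with he
  set b : Fin r → MPoly k n := fun i => (e i : MPoly k n) with hb
  obtain ⟨q, hq⟩ := U.exists_isCompl
  set c : Fin r → MPoly k n →ₗ[k] k :=
    fun j => (e.coord j).comp (U.projectionOnto q hq) with hc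
  have hdual : ∀ i j, c j (b i) = if i = j then 1 else 0 := by
    intro i j
    rw [hc]
    simp only [LinearMap.comp_apply, hb]
    rw [Submodule.projectionOnto_apply_left hq (e i)]
    rw [Module.Basis.coord_apply, Module.Basis.repr_self, Finsupp.single_apply]
  have hrepr : ∀ (u : MPoly k n) (hu : u ∈ U),
      u = ∑ s, e.repr ⟨u, hu⟩ s • b s := by
    intro u hu
    have h2 : ((∑ s, e.repr ⟨u, hu⟩ s • e s : U) : MPoly k n)
        = ∑ s, e.repr ⟨u, hu⟩ s • b s := by
      push_cast
      rfl
    rw [← h2, e.sum_repr ⟨u, hu⟩]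
  -- evaluation at 1 as a linear functional
  set ev1 : MPoly k n →ₗ[k] k :=
    (aeval fun ij : Fin n × Fin n => (1 : Mat k n) ij.1 ij.2).toLinearMap with hev1
  have hev1_apply : ∀ p : MPoly k n, ev1 p = mEval 1 p := by
    intro p; rw [hev1, mEval_eq_aeval]; rfl
  -- the two families and their dual functionals
  set b' : Fin 1 ⊕ Fin r → MPoly k n := Sum.elim (fun _ => γ) b with hb'
  set c' : Fin 1 ⊕ Fin r → MPoly k n →ₗ[k] k :=
    Sum.elim (fun _ => ev1) (fun j => c j - c j γ • ev1) with hc'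
  have hγ1 : mEval 1 γ = 1 := hγ.map_one
  have hvb : ∀ i, mEval 1 (b i) = 0 := fun i => hvan _ (e i).2
  have hdual' : ∀ i j, c' j (b' i) = if i = j then 1 else 0 := by
    rintro (i | i) (j | j) <;>
      simp only [hb', hc', Sum.elim_inl, Sum.elim_inr, LinearMap.sub_apply,
        LinearMap.smul_apply, smul_eq_mul, hev1_apply]
    · simp [hγ1, Subsingleton.elim i j]
    · rw [hγ1, mul_one, sub_self]; simp
    · rw [hvb i]; simp
    · rw [hdual i j, hvb i, mul_zero, sub_zero]
      simp [Sum.inr.injEq]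
  -- the two semiinvariant determinants
  obtain ⟨f₀, hf₀1, hf₀⟩ := core b c hdual
  obtain ⟨f₁, hf₁1, hf₁⟩ := core b' c' hdual'
  -- the key semiinvariance property
  have main : ∀ h ∈ H, ∃ δ : k,
      (∀ m : Mat k n, mEval (h * m) f₀ = δ * mEval m f₀) ∧
      (∀ m : Mat k n, mEval (h * m) f₁ = mEval h γ * δ * mEval m f₁) := by
    intro h hh
    have hmem : ∀ i, Tsub h (b i) ∈ U := fun i => hstab h hh _ (e i).2
    set B₀ : Matrix (Fin r) (Fin r) k :=
      Matrix.of fun i s => e.repr ⟨Tsub h (b i), hmem i⟩ s with hB₀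
    have hcoord₀ : ∀ i, Tsub h (b i) = ∑ s, B₀ i s • b s := fun i => hrepr _ (hmem i)
    have sem₀ := hf₀ h B₀ hcoord₀
    set B₁ : Matrix (Fin 1 ⊕ Fin r) (Fin 1 ⊕ Fin r) k :=
      Matrix.fromBlocks (Matrix.of fun _ _ => mEval h γ)
        (Matrix.of fun _ s => e.repr ⟨Tsub h γ - mEval h γ • γ, hgen h hh⟩ s) 0 B₀
      with hB₁
    have hcoord₁ : ∀ i, Tsub h (b' i) = ∑ s, B₁ i s • b' s := by
      rintro (i | i)
      · rw [hb', Sum.elim_inl, Fintype.sum_sum_type]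
        simp only [hB₁, Matrix.fromBlocks_apply₁₁, Matrix.fromBlocks_apply₁₂,
          Matrix.of_apply, Sum.elim_inl, Sum.elim_inr]
        rw [Fin.sum_univ_one]
        rw [← hrepr _ (hgen h hh)]
        abel
      · rw [hb', Sum.elim_inr, Fintype.sum_sum_type]
        simp only [hB₁, Matrix.fromBlocks_apply₂₁, Matrix.fromBlocks_apply₂₂,
          Matrix.of_apply, Sum.elim_inl, Sum.elim_inr, Matrix.zero_apply]
        rw [Fin.sum_univ_one, zero_smul, zero_add]
        exact hcoord₀ i
    have sem₁ := hf₁ h B₁ hcoord₁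
    refine ⟨B₀.det, sem₀, fun m => ?_⟩
    rw [sem₁ m, hB₁, Matrix.det_fromBlocks_zero₂₁, Matrix.det_fin_one, Matrix.of_apply]
  -- values of `f₀` on `H` give the character
  have hval : ∀ h ∈ H, ∀ δ : k, (∀ m : Mat k n, mEval (h * m) f₀ = δ * mEval m f₀) →
      mEval h f₀ = δ := by
    intro h hh δ hδ
    have := hδ 1
    rwa [mul_one, hf₀1, mul_one] at this
  have hchar₀ : ∀ h ∈ H, ∀ m : Mat k n, mEval (h * m) f₀ = mEval h f₀ * mEval m f₀ := by
    intro h hh m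
    obtain ⟨δ, h₀, -⟩ := main h hh
    rw [h₀ m, hval h hh δ h₀]
  have hchar₁ : ∀ h ∈ H, ∀ m : Mat k n,
      mEval (h * m) f₁ = mEval h γ * mEval h f₀ * mEval m f₁ := by
    intro h hh m
    obtain ⟨δ, h₀, h₁⟩ := main h hh
    rw [h₁ m, hval h hh δ h₀]
  have hmul_eval : ∀ (x : Mat k n) (p₂ : MPoly k n),
      mEval x (γ * p₂) = mEval x γ * mEval x p₂ := by
    intro x p₂
    rw [mEval, map_mul]
    rfl
  refine ⟨f₀, ⟨hf₀1, fun a ha b hb => hchar₀ a ha b⟩,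
    ⟨f₀, ?_, fun h hh m _ => hchar₀ h hh m⟩,
    ⟨f₁, ?_, fun h hh m _ => ?_⟩⟩
  · intro hv
    have := hv 1 hM.one_mem
    rw [hf₀1] at this
    exact one_ne_zero this
  · intro hv
    have := hv 1 hM.one_mem
    rw [hf₁1] at this
    exact one_ne_zero this
  · rw [hchar₁ h hh m, hmul_eval h f₀]
end AlgebraicMonoid
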